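/- Let Π be a probability measure on ℝ × (0,∞) (the posterior law of (ν,τ) given the data), written as the composition of its second marginal (the law of τ) with a conditional kernel giving, for each τ, the conditional law of ν. Assume that for (almost) every τ the conditional law of ν given τ has a Lebesgue density that is symmetric about a point m and nonincreasing on [m,∞), where m does not depend on τ (so m equals the mean E(ν)). For A ∈ ℝ, B > 0 and δ ∈ (0,1) let G_{A,B,δ} = {(ν,τ) ∈ ℝ×(0,∞) : Φ((A+B−ν)/τ) − Φ((A−B−ν)/τ) ≥ 1−δ}, where Φ is the standard normal CDF. Then for every A ∈ ℝ and B > 0 one has Π(G_{A,B,δ}) ≤ Π(G_{m,B,δ}); consequently the shortest interval [A−B, A+B] with Π(G_{A,B,δ}) ≥ 1−α can be taken centered at A = m. -/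

import Mathlib

open MeasureTheory ProbabilityTheory

/-- The standard normal cumulative distribution function. -/
noncomputable def stdNormCDF (x : ℝ) : ℝ := ((gaussianReal 0 1) (Set.Iic x)).toReal

/-- The set `G_{A,B,δ} = {(ν,τ) ∈ ℝ×(0,∞) : Φ((A+B−ν)/τ) − Φ((A−B−ν)/τ) ≥ 1−δ}`. -/
def Gset (A B δ : ℝ) : Set (ℝ × ℝ) :=
  {p | 0 < p.2 ∧ 1 - δ ≤ stdNormCDF ((A + B - p.1) / p.2) - stdNormCDF ((A - B - p.1) / p.2)}

lemma stdNormCDF_mono : Monotone stdNormCDF := fun _ _ hxy =>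
  ENNReal.toReal_mono (measure_ne_top _ _) (measure_mono (Set.Iic_subset_Iic.2 hxy))

lemma measurable_stdNormCDF : Measurable stdNormCDF := stdNormCDF_mono.measurable

lemma stdNormCDF_sub {a b : ℝ} (hab : a ≤ b) :
    stdNormCDF b - stdNormCDF a = ((gaussianReal 0 1) (Set.Ioc a b)).toReal := by
  have h : Set.Iic a ∪ Set.Ioc a b = Set.Iic b := Set.Iic_union_Ioc_eq_Iic hab
  have hd : Disjoint (Set.Iic a) (Set.Ioc a b) := by
    simp [Set.disjoint_left]
    intro x hx h1
    linarith
  have h2 := measure_union (μ := gaussianReal 0 1) hd measurableSet_Ioc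
  rw [h] at h2
  rw [stdNormCDF, stdNormCDF, h2, ENNReal.toReal_add (measure_ne_top _ _) (measure_ne_top _ _)]
  ring

lemma gaussianReal_singleton (x : ℝ) : gaussianReal 0 1 {x} = 0 :=
  gaussianReal_absolutelyContinuous 0 one_ne_zero (Real.volume_singleton)

lemma stdNormCDF_neg (x : ℝ) : stdNormCDF (-x) = 1 - stdNormCDF x := by
  have hmap : (gaussianReal 0 1).map (fun y => (-1 : ℝ) * y) = gaussianReal 0 1 := by
    rw [gaussianReal_map_const_mul (-1 : ℝ)]
    norm_num
  have h1 : gaussianReal 0 1 (Set.Iic (-x)) = gaussianReal 0 1 (Set.Ici x) := by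
    conv_lhs => rw [← hmap]
    rw [Measure.map_apply (by fun_prop) measurableSet_Iic]
    congr 1
    ext y
    simp only [Set.mem_preimage, Set.mem_Iic, Set.mem_Ici]
    constructor <;> intro h <;> linarith
  have h2 : gaussianReal 0 1 (Set.Iio x) = gaussianReal 0 1 (Set.Iic x) := by
    rw [← Set.Iio_union_right, measure_union (by simp) (measurableSet_singleton x),
      gaussianReal_singleton, add_zero]
  have h3 : gaussianReal 0 1 (Set.Ici x) = 1 - gaussianReal 0 1 (Set.Iio x) := by
    rw [← prob_compl_eq_one_sub measurableSet_Iio, Set.compl_Iio]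
  rw [stdNormCDF, stdNormCDF, h1, h3, h2, ENNReal.toReal_sub_of_le (prob_le_one)
    ENNReal.one_ne_top]
  simp

/-- Translation invariance of the Lebesgue integral on `ℝ`. -/
lemma lintegral_shift (g : ℝ → ENNReal) (hg : Measurable g) (s : ℝ) :
    ∫⁻ x, g (x + s) = ∫⁻ x, g x := by
  conv_rhs => rw [← map_add_right_eq_self volume s]
  rw [lintegral_map hg (measurable_add_const s)]

/-- Shifting an interval away from the origin reduces its standard Gaussian measure. -/
lemma gauss_Ioc_shift {a b s : ℝ} (hab : a ≤ b) (hs : 0 ≤ s) (ha : -(s/2) ≤ a) :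
    gaussianReal 0 1 (Set.Ioc (a+s) (b+s)) ≤ gaussianReal 0 1 (Set.Ioc a b) := by
  rw [gaussianReal_apply 0 one_ne_zero, gaussianReal_apply 0 one_ne_zero]
  have h1 : ∫⁻ x in Set.Ioc (a+s) (b+s), gaussianPDF 0 1 x
      = ∫⁻ x in Set.Ioc a b, gaussianPDF 0 1 (x + s) := by
    rw [← lintegral_indicator measurableSet_Ioc, ← lintegral_indicator measurableSet_Ioc]
    rw [← lintegral_shift (fun x => (Set.Ioc (a+s) (b+s)).indicator (gaussianPDF 0 1) x)
      ((measurable_gaussianPDF 0 1).indicator measurableSet_Ioc) s]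
    apply lintegral_congr
    intro x
    by_cases hx : x ∈ Set.Ioc a b
    · rw [Set.indicator_of_mem hx, Set.indicator_of_mem]
      exact ⟨by linarith [hx.1], by linarith [hx.2]⟩
    · rw [Set.indicator_of_notMem hx, Set.indicator_of_notMem]
      intro hmem
      exact hx ⟨by linarith [hmem.1], by linarith [hmem.2]⟩
  rw [h1]
  apply setLIntegral_mono (measurable_gaussianPDF 0 1)
  intro x hx
  unfold gaussianPDF gaussianPDFReal
  apply ENNReal.ofReal_le_ofReal
  apply mul_le_mul_of_nonneg_left _ (by positivity)
  apply Real.exp_le_exp.mpr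
  have hxa : a ≤ x := le_of_lt hx.1
  rw [div_le_div_iff_of_pos_right (by norm_num)]
  nlinarith

/-- Core lemma: intersection of a "solid symmetric" set about `m` with an interval of
radius `r` has largest Lebesgue measure when the interval is centered at `m`. -/
lemma core_solid (S : Set ℝ) (m : ℝ) (hS : ∀ x y : ℝ, |x - m| ≤ |y - m| → y ∈ S → x ∈ S)
    (c r : ℝ) : volume (S ∩ Set.Icc (c-r) (c+r)) ≤ volume (S ∩ Set.Ioo (m-r) (m+r)) := by
  rcases le_or_gt r 0 with hr | hr
  · rcases lt_or_eq_of_le hr with hr' | hr'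
    · have : Set.Icc (c-r) (c+r) = ∅ := Set.Icc_eq_empty (by intro h; linarith)
      simp [this]
    · subst hr'
      have : Set.Icc (c-(0:ℝ)) (c+0) = {c} := by norm_num
      calc volume (S ∩ Set.Icc (c-(0:ℝ)) (c+0)) ≤ volume ({c} : Set ℝ) :=
            measure_mono (by rw [this]; exact Set.inter_subset_right)
        _ = 0 := Real.volume_singleton
        _ ≤ _ := zero_le
  rcases Set.eq_empty_or_nonempty S with hSe | hSne
  · simp [hSe]
  by_cases hbdd : ∃ R : ℝ, ∀ x ∈ S, |x - m| ≤ R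
  · -- S bounded: let ρ be the sup of distances
    set D := (fun x => |x - m|) '' S with hD
    have hDne : D.Nonempty := hSne.image _
    have hDbdd : BddAbove D := by
      obtain ⟨R, hR⟩ := hbdd
      exact ⟨R, fun d ⟨x, hx, hdx⟩ => hdx ▸ hR x hx⟩
    set ρ := sSup D with hρ
    have hub : ∀ x ∈ S, |x - m| ≤ ρ := fun x hx => le_csSup hDbdd ⟨x, hx, rfl⟩
    have hρ0 : 0 ≤ ρ := by
      obtain ⟨x, hx⟩ := hSne
      exact le_trans (abs_nonneg _) (hub x hx)
    have hin : ∀ x : ℝ, |x - m| < ρ → x ∈ S := by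
      intro x hx
      obtain ⟨d, hd, hxd⟩ := exists_lt_of_lt_csSup hDne hx
      obtain ⟨y, hy, rfl⟩ := hd
      exact hS x y hxd.le hy
    set rm := min ρ r with hrm
    have hrm0 : 0 ≤ rm := le_min hρ0 hr.le
    have hsub1 : S ∩ Set.Icc (c-r) (c+r) ⊆ Set.Icc (m-ρ) (m+ρ) := by
      intro x ⟨hx1, _⟩
      have := hub x hx1
      rw [abs_le] at this
      constructor <;> linarith [this.1, this.2]
    have hsub2 : S ∩ Set.Icc (c-r) (c+r) ⊆ Set.Icc (c-r) (c+r) := Set.inter_subset_right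
    have hL : volume (S ∩ Set.Icc (c-r) (c+r)) ≤ ENNReal.ofReal (2*rm) := by
      rcases le_total ρ r with h | h
      · calc volume (S ∩ Set.Icc (c-r) (c+r)) ≤ volume (Set.Icc (m-ρ) (m+ρ)) :=
              measure_mono hsub1
          _ = ENNReal.ofReal (2*rm) := by rw [Real.volume_Icc, hrm, min_eq_left h]; ring_nf
      · calc volume (S ∩ Set.Icc (c-r) (c+r)) ≤ volume (Set.Icc (c-r) (c+r)) :=
              measure_mono hsub2
          _ = ENNReal.ofReal (2*rm) := by rw [Real.volume_Icc, hrm, min_eq_right h]; ring_nf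
    have hsub3 : Set.Ioo (m-rm) (m+rm) ⊆ S ∩ Set.Ioo (m-r) (m+r) := by
      intro x hx
      have habs : |x - m| < rm := by rw [abs_lt]; exact ⟨by linarith [hx.1], by linarith [hx.2]⟩
      refine ⟨hin x (lt_of_lt_of_le habs (min_le_left _ _)), ?_, ?_⟩
      · linarith [hx.1, min_le_right ρ r]
      · linarith [hx.2, min_le_right ρ r]
    calc volume (S ∩ Set.Icc (c-r) (c+r)) ≤ ENNReal.ofReal (2*rm) := hL
      _ = volume (Set.Ioo (m-rm) (m+rm)) := by rw [Real.volume_Ioo]; ring_nf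
      _ ≤ volume (S ∩ Set.Ioo (m-r) (m+r)) := measure_mono hsub3
  · push_neg at hbdd
    have hSuniv : S = Set.univ := by
      ext x
      simp only [Set.mem_univ, iff_true]
      obtain ⟨y, hy, hxy⟩ := hbdd |x - m|
      exact hS x y hxy.le hy
    rw [hSuniv]
    simp only [Set.univ_inter]
    rw [Real.volume_Icc, Real.volume_Ioo]
    apply ENNReal.ofReal_le_ofReal
    ring_nf
    rfl

lemma solid_inter_shift (S V : Set ℝ) (m a : ℝ)
    (hS : ∀ x y : ℝ, |x - m| ≤ |y - m| → y ∈ S → x ∈ S)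
    (hV : ∀ x y : ℝ, |x - m| ≤ |y - m| → y ∈ V → x ∈ V) :
    volume (S ∩ {x | x - a ∈ V}) ≤ volume (S ∩ V) := by
  rcases Set.eq_empty_or_nonempty V with hVe | hVne
  · have : {x : ℝ | x - a ∈ V} = ∅ := by ext x; simp [hVe]
    simp [this, hVe]
  by_cases hbdd : ∃ R : ℝ, ∀ x ∈ V, |x - m| ≤ R
  · have hDne : ((fun x => |x - m|) '' V).Nonempty := hVne.image _
    have hDbdd : BddAbove ((fun x => |x - m|) '' V) := by
      obtain ⟨R, hR⟩ := hbdd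
      exact ⟨R, fun d ⟨x, hx, hdx⟩ => hdx ▸ hR x hx⟩
    set r := sSup ((fun x => |x - m|) '' V) with hr
    have hub : ∀ x ∈ V, |x - m| ≤ r := fun x hx => le_csSup hDbdd ⟨x, hx, rfl⟩
    have hin : ∀ x : ℝ, |x - m| < r → x ∈ V := by
      intro x hx
      obtain ⟨d, hd, hxd⟩ := exists_lt_of_lt_csSup hDne hx
      obtain ⟨y, hy, rfl⟩ := hd
      exact hV x y hxd.le hy
    have h1 : {x : ℝ | x - a ∈ V} ⊆ Set.Icc ((m+a)-r) ((m+a)+r) := by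
      intro x hx
      have := hub (x - a) hx
      rw [abs_le] at this
      constructor <;> [linarith [this.1]; linarith [this.2]]
    calc volume (S ∩ {x | x - a ∈ V})
        ≤ volume (S ∩ Set.Icc ((m+a)-r) ((m+a)+r)) :=
          measure_mono (Set.inter_subset_inter_right _ h1)
      _ ≤ volume (S ∩ Set.Ioo (m-r) (m+r)) := core_solid S m hS (m+a) r
      _ ≤ volume (S ∩ V) := by
          apply measure_mono (Set.inter_subset_inter_right _ _)
          intro x hx
          apply hin
          rw [abs_lt]
          exact ⟨by linarith [hx.1], by linarith [hx.2]⟩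
  · push_neg at hbdd
    have hVuniv : V = Set.univ := by
      ext x
      simp only [Set.mem_univ, iff_true]
      obtain ⟨y, hy, hxy⟩ := hbdd |x - m|
      exact hV x y hxy.le hy
    have : {x : ℝ | x - a ∈ V} = Set.univ := by ext x; simp [hVuniv]
    rw [this, hVuniv]

/-- A density that decreases with distance from `m` gives larger mass to a solid
symmetric set centered at `m` than to any of its translates. -/
lemma density_shift_le (f : ℝ → ℝ) (m : ℝ) (hf : Measurable f) (h0 : ∀ x, 0 ≤ f x)
    (hsolidf : ∀ x y : ℝ, |x - m| ≤ |y - m| → f y ≤ f x)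
    (V : Set ℝ) (hV : ∀ x y : ℝ, |x - m| ≤ |y - m| → y ∈ V → x ∈ V) (a : ℝ) :
    ∫⁻ x in {x | x - a ∈ V}, ENNReal.ofReal (f x) ≤ ∫⁻ x in V, ENNReal.ofReal (f x) := by
  have key : ∀ E : Set ℝ, ∫⁻ x in E, ENNReal.ofReal (f x) =
      ∫⁻ t in Set.Ioi (0:ℝ), volume ({x | t < f x} ∩ E) := by
    intro E
    rw [lintegral_eq_lintegral_meas_lt _ (ae_of_all _ h0) hf.aemeasurable]
    apply lintegral_congr
    intro t
    exact Measure.restrict_apply (measurableSet_lt measurable_const hf)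
  rw [key, key]
  apply lintegral_mono
  intro t
  apply solid_inter_shift _ _ m a _ hV
  intro x y hxy hy
  exact lt_of_lt_of_le hy (hsolidf x y hxy)

/-- The window function `u ↦ Φ((B-u)/t) - Φ((-B-u)/t)` is nonincreasing in `|u|`. -/
lemma window_solid {B t : ℝ} (hB : 0 < B) (ht : 0 < t) :
    ∀ u v : ℝ, |u| ≤ |v| →
      stdNormCDF ((B - v)/t) - stdNormCDF ((-B - v)/t)
        ≤ stdNormCDF ((B - u)/t) - stdNormCDF ((-B - u)/t) := by
  have flip : ∀ w : ℝ, stdNormCDF ((B - w)/t) - stdNormCDF ((-B - w)/t)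
      = stdNormCDF ((w + B)/t) - stdNormCDF ((w - B)/t) := by
    intro w
    have e1 : (B - w)/t = -((w - B)/t) := by ring
    have e2 : (-B - w)/t = -((w + B)/t) := by ring
    rw [e1, e2, stdNormCDF_neg, stdNormCDF_neg]
    ring
  have anti : ∀ p q : ℝ, 0 ≤ p → p ≤ q →
      stdNormCDF ((q + B)/t) - stdNormCDF ((q - B)/t)
        ≤ stdNormCDF ((p + B)/t) - stdNormCDF ((p - B)/t) := by
    intro p q hp hpq
    have hab : (p - B)/t ≤ (q - B)/t := by
      apply div_le_div_of_nonneg_right (by linarith) ht.le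
    have hab2 : (p + B)/t ≤ (q + B)/t := by
      apply div_le_div_of_nonneg_right (by linarith) ht.le
    have hs : (0:ℝ) ≤ 2*B/t := by positivity
    have ha : -(2*B/t/2) ≤ (p - B)/t := by
      have e : -(2*B/t/2) = (0 - B)/t := by ring
      rw [e]
      apply div_le_div_of_nonneg_right (by linarith) ht.le
    have hshift := gauss_Ioc_shift hab hs ha
    have e1 : (p - B)/t + 2*B/t = (p + B)/t := by ring
    have e2 : (q - B)/t + 2*B/t = (q + B)/t := by ring
    rw [e1, e2] at hshift
    have r1 := stdNormCDF_sub hab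
    have r2 := stdNormCDF_sub hab2
    have hmono := ENNReal.toReal_mono (measure_ne_top _ _) hshift
    rw [← r1, ← r2] at hmono
    linarith
  intro u v huv
  rw [flip u, flip v]
  have evenW : ∀ w : ℝ, stdNormCDF ((w + B)/t) - stdNormCDF ((w - B)/t)
      = stdNormCDF ((|w| + B)/t) - stdNormCDF ((|w| - B)/t) := by
    intro w
    rcases le_or_gt 0 w with h | h
    · rw [abs_of_nonneg h]
    · rw [abs_of_neg h]
      have e1 : (w + B)/t = -((-w - B)/t) := by ring
      have e2 : (w - B)/t = -((-w + B)/t) := by ring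
      rw [e1, e2, stdNormCDF_neg, stdNormCDF_neg]
      have e3 : -w + B = -w - -B := by ring
      rw [e3] at *
      ring
  rw [evenW u, evenW v]
  exact anti |u| |v| (abs_nonneg u) huv

/-- Let `post` be a probability measure on `ℝ × (0,∞)` (the posterior law
of `(ν,τ)`), written as the composition of its second marginal `μτ` (the law of `τ`) with a
conditional kernel `κ` giving the conditional law of `ν` given `τ`. If for a.e. `τ` the
conditional law of `ν` has a Lebesgue density that is symmetric about a point `m` (not
depending on `τ`) and nonincreasing on `[m,∞)`, then `Π(G_{A,B,δ}) ≤ Π(G_{m,B,δ})` for all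
`A`, `B > 0`; consequently the shortest interval `[A−B, A+B]` with `Π(G_{A,B,δ}) ≥ 1−α`
can be taken centered at `A = m`. -/
theorem bayesian_tolerance_centered_at_symmetry_point
    (post : Measure (ℝ × ℝ)) [IsProbabilityMeasure post]
    (μτ : Measure ℝ) [IsProbabilityMeasure μτ] (κ : Kernel ℝ ℝ) [IsMarkovKernel κ]
    (hμτ : μτ = post.map Prod.snd)
    (hpost : post = (μτ ⊗ₘ κ).map Prod.swap)
    (hpos : ∀ᵐ t ∂μτ, 0 < t)
    (m : ℝ) (f : ℝ → ℝ → ℝ)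
    (hnonneg : ∀ t x, 0 ≤ f t x)
    (hdens : ∀ᵐ t ∂μτ, κ t = volume.withDensity fun x => ENNReal.ofReal (f t x))
    (hsymm : ∀ᵐ t ∂μτ, ∀ x, f t (m + x) = f t (m - x))
    (hanti : ∀ᵐ t ∂μτ, AntitoneOn (f t) (Set.Ici m))
    (δ α : ℝ) (hδ : δ ∈ Set.Ioo (0 : ℝ) 1) (hα : α ∈ Set.Ioo (0 : ℝ) 1) :
    ∀ A B : ℝ, 0 < B →
      post (Gset A B δ) ≤ post (Gset m B δ) ∧
      (ENNReal.ofReal (1 - α) ≤ post (Gset A B δ) →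
        ENNReal.ofReal (1 - α) ≤ post (Gset m B δ)) := by
  
  intro A B hB
  have hmeasG : ∀ C : ℝ, MeasurableSet (Gset C B δ) := by
    intro C
    have hsplit : Gset C B δ = {p : ℝ × ℝ | 0 < p.2} ∩
        {p : ℝ × ℝ | 1 - δ ≤ stdNormCDF ((C + B - p.1) / p.2)
          - stdNormCDF ((C - B - p.1) / p.2)} := by
      ext p; simp [Gset, Set.mem_setOf_eq, Set.mem_inter_iff]
    rw [hsplit]
    apply MeasurableSet.inter
    · exact measurable_snd measurableSet_Ioi
    · apply measurableSet_le measurable_const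
      apply Measurable.sub <;>
        exact measurable_stdNormCDF.comp
          ((measurable_const.sub measurable_fst).div measurable_snd)
  have key : ∀ C : ℝ, post (Gset C B δ) = ∫⁻ t, κ t {x | (x, t) ∈ Gset C B δ} ∂μτ := by
    intro C
    rw [hpost, Measure.map_apply measurable_swap (hmeasG C),
      Measure.compProd_apply (measurable_swap (hmeasG C))]
    rfl
  have main : post (Gset A B δ) ≤ post (Gset m B δ) := by
    rw [key A, key m]
    apply lintegral_mono_ae
    filter_upwards [hpos, hdens, hsymm, hanti] with t ht hd hs ha
    -- representation of f t in terms of the distance to m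
    have hrep : ∀ z : ℝ, f t z = f t (m + |z - m|) := by
      intro z
      rcases le_total m z with h | h
      · rw [abs_of_nonneg (by linarith : (0:ℝ) ≤ z - m)]
        congr 1; ring
      · rw [abs_of_nonpos (by linarith : z - m ≤ (0:ℝ))]
        have e : m + -(z - m) = m - (z - m) := by ring
        rw [e, ← hs (z - m)]
        congr 1; ring
    have hmf0 : ∀ x y : ℝ, |x - m| ≤ |y - m| → f t y ≤ f t x := by
      intro x y hxy
      rw [hrep x, hrep y]
      exact ha (Set.mem_Ici.2 (by linarith [abs_nonneg (x - m)]))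
        (Set.mem_Ici.2 (by linarith [abs_nonneg (y - m)])) (by linarith)
    have eabs : ∀ w : ℝ, |m + max w 0 - m| = max w 0 := by
      intro w
      rw [add_sub_cancel_left]
      exact abs_of_nonneg (le_max_right _ _)
    have hG : Antitone (fun u : ℝ => f t (m + max u 0)) := by
      intro u v huv
      apply hmf0
      rw [eabs, eabs]
      exact max_le_max huv le_rfl
    have hmf : Measurable (f t) := by
      have hfc : f t = (fun u : ℝ => f t (m + max u 0)) ∘ (fun x => |x - m|) := by
        funext x
        simp only [Function.comp]
        rw [max_eq_left (abs_nonneg _)]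
        exact hrep x
      rw [hfc]
      exact hG.measurable.comp ((measurable_id.sub measurable_const).abs)
    set V : Set ℝ := {y : ℝ | 1 - δ ≤ stdNormCDF ((B - (y - m))/t)
      - stdNormCDF ((-B - (y - m))/t)} with hVdef
    have hVmeas : MeasurableSet V := by
      apply measurableSet_le measurable_const
      apply Measurable.sub <;>
        exact measurable_stdNormCDF.comp
          ((measurable_const.sub (measurable_id.sub measurable_const)).div_const t)
    have hsect : ∀ C : ℝ, {x : ℝ | (x, t) ∈ Gset C B δ} = {x : ℝ | x - (C - m) ∈ V} := by
      intro C
      ext x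
      simp only [Gset, Set.mem_setOf_eq, hVdef, ht, true_and]
      have e1 : (C + B - x)/t = (B - (x - (C - m) - m))/t := by ring
      have e2 : (C - B - x)/t = (-B - (x - (C - m) - m))/t := by ring
      rw [e1, e2]
    have hVsolid : ∀ x y : ℝ, |x - m| ≤ |y - m| → y ∈ V → x ∈ V := by
      intro x y hxy hy
      exact le_trans hy (window_solid hB ht (x - m) (y - m) hxy)
    have hEA : MeasurableSet {x : ℝ | x - (A - m) ∈ V} :=
      (measurable_id.sub measurable_const) hVmeas
    have hVm : {x : ℝ | x - (m - m) ∈ V} = V := by ext x; simp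
    calc κ t {x | (x, t) ∈ Gset A B δ}
        = ∫⁻ x in {x : ℝ | x - (A - m) ∈ V}, ENNReal.ofReal (f t x) := by
          rw [hsect A, hd, withDensity_apply _ hEA]
      _ ≤ ∫⁻ x in V, ENNReal.ofReal (f t x) :=
          density_shift_le (f t) m hmf (hnonneg t) hmf0 V hVsolid (A - m)
      _ = κ t {x | (x, t) ∈ Gset m B δ} := by
          rw [hsect m, hVm, hd, withDensity_apply _ hVmeas]
  exact ⟨main, fun h => le_trans h main⟩
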